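/- arXiv:2006.03372 — 4 statements merged into one kernel-verified Lean document; each statement's English description precedes it below -/
import Mathlib

section
/- Let G = (V,E) be a finite undirected simple graph, h a positive integer, v ∈ V, and u ∈ N_v^h(G) with s = dis_G(u,v). Define F_u = {w ∈ N_v^{h-s}(G) : dis_{G(V \ {v})}(u,w) > h}. Then N_u^h(G) \ N_u^h(G(V \ {v})) = {v} ∪ F_u; that is, the vertices removed from the h-hop neighborhood of u by deleting v are exactly v itself together with the vertices of the (h−s)-hop neighborhood of v whose distance to u in G(V \ {v}) exceeds h. -/
open SimpleGraph

variable {V : Type*} [Fintype V] [DecidableEq V]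

/-- The subgraph of `G` induced by the vertex set `S`, viewed as a graph on the
same vertex type (edges are exactly the edges of `G` with both endpoints in `S`). -/
def SimpleGraph.inducedOn (G : SimpleGraph V) (S : Set V) : SimpleGraph V where
  Adj x y := G.Adj x y ∧ x ∈ S ∧ y ∈ S
  symm := ⟨fun _ _ ⟨ha, hx, hy⟩ => ⟨ha.symm, hy, hx⟩⟩
  loopless := ⟨fun _ ⟨ha, _, _⟩ => G.irrefl ha⟩

/-- The `h`-hop neighborhood of `v` in `G`:
all vertices `u ≠ v` with `dis_G(v,u) ≤ h`. -/
def SimpleGraph.hNbhd (G : SimpleGraph V) (h : ℕ) (v : V) : Set V :=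
  {u | u ≠ v ∧ G.edist v u ≤ (h : ℕ∞)}

/-- The `h`-degree of `v` in `G`: the number of vertices in its `h`-hop neighborhood. -/
noncomputable def SimpleGraph.hDeg (G : SimpleGraph V) (h : ℕ) (v : V) : ℕ :=
  (G.hNbhd h v).ncard

set_option linter.unusedSectionVars false

lemma aux_walk_eq (G : SimpleGraph V) (v x : V) (p : (G.inducedOn {v}ᶜ).Walk v x) : v = x := by
  cases p with
  | nil => rfl
  | cons h q => exact absurd rfl (show _ ∧ _ ∧ _ from h).2.1

lemma aux_edist_top (G : SimpleGraph V) (v u : V) (huv : u ≠ v) :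
    (G.inducedOn {v}ᶜ).edist u v = ⊤ := by
  apply SimpleGraph.edist_eq_top_of_not_reachable
  rintro ⟨p⟩
  exact huv (aux_walk_eq G v u p.reverse).symm

lemma aux_transfer (G : SimpleGraph V) (v : V) {u w : V} (p : G.Walk u w)
    (hv : v ∉ p.support) : (G.inducedOn {v}ᶜ).edist u w ≤ p.length := by
  have hE : ∀ e ∈ p.edges, e ∈ (G.inducedOn {v}ᶜ).edgeSet := by
    intro e he
    induction e using Sym2.ind with
    | _ a b =>
      rw [SimpleGraph.mem_edgeSet]
      refine (⟨p.adj_of_mem_edges he, ?_, ?_⟩ : G.Adj a b ∧ a ∈ ({v}ᶜ : Set V) ∧ b ∈ ({v}ᶜ : Set V))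
      · intro hav; exact hv (hav ▸ p.fst_mem_support_of_mem_edges he)
      · intro hbv; exact hv (hbv ▸ p.snd_mem_support_of_mem_edges he)
  have := SimpleGraph.edist_le (p.transfer _ hE)
  rwa [SimpleGraph.Walk.length_transfer] at this

/-- Observation 2: the vertices removed from the `h`-hop neighborhood of `u`
by deleting `v` are exactly `v` together with
`F_u = {w ∈ N_v^{h-s}(G) : dis_{G(V∖{v})}(u,w) > h}`. -/
theorem stmt2 (G : SimpleGraph V) (h : ℕ) (hpos : 0 < h) (v u : V) (s : ℕ)
    (hu : u ∈ G.hNbhd h v) (hs : G.edist u v = (s : ℕ∞)) :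
    G.hNbhd h u \ (G.inducedOn {v}ᶜ).hNbhd h u =
      {v} ∪ {w ∈ G.hNbhd (h - s) v | (h : ℕ∞) < (G.inducedOn {v}ᶜ).edist u w} := by
  obtain ⟨huv, hvu⟩ := hu
  have hsh : s ≤ h := by
    have : (s : ℕ∞) ≤ (h : ℕ∞) := by rw [← hs, SimpleGraph.edist_comm]; exact hvu
    exact_mod_cast this
  ext w
  simp only [Set.mem_diff, Set.mem_union, Set.mem_singleton_iff, Set.mem_setOf_eq,
    SimpleGraph.hNbhd, not_and, not_le]
  constructor
  · rintro ⟨⟨hwu, hGw⟩, hnot⟩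
    have hbig : (h : ℕ∞) < (G.inducedOn {v}ᶜ).edist u w := hnot hwu
    by_cases hwv : w = v
    · exact Or.inl hwv
    · refine Or.inr ⟨⟨hwv, ?_⟩, hbig⟩
      -- get a shortest walk u → w in G
      have hne : G.edist u w ≠ ⊤ := fun ht => by
        rw [ht] at hGw; exact (ENat.coe_lt_top h).not_ge hGw
      obtain ⟨p, hp⟩ := SimpleGraph.exists_walk_of_edist_ne_top hne
      have hplen : (p.length : ℕ∞) ≤ (h : ℕ∞) := by rw [hp]; exact hGw
      have hvmem : v ∈ p.support := by
        by_contra hvp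
        exact (lt_of_lt_of_le hbig (le_trans (aux_transfer G v p hvp) hplen)).false
      have h1 : (s : ℕ∞) ≤ ((p.takeUntil v hvmem).length : ℕ∞) := by
        rw [← hs]; exact SimpleGraph.edist_le _
      have h2 : G.edist v w ≤ ((p.dropUntil v hvmem).length : ℕ∞) :=
        SimpleGraph.edist_le _
      have h3 : (s : ℕ∞) + G.edist v w ≤ (h : ℕ∞) := by
        calc (s : ℕ∞) + G.edist v w
            ≤ ((p.takeUntil v hvmem).length : ℕ∞) + ((p.dropUntil v hvmem).length : ℕ∞) :=
              add_le_add h1 h2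
          _ = (p.length : ℕ∞) := by
              rw [← Nat.cast_add]
              congr 1
              conv_rhs => rw [← p.take_spec hvmem]
              rw [SimpleGraph.Walk.length_append]
          _ ≤ (h : ℕ∞) := hplen
      have h4 : G.edist v w ≤ (h : ℕ∞) - (s : ℕ∞) := ENat.le_sub_of_add_le_left (ENat.coe_ne_top s) h3
      rw [ENat.coe_sub]; exact h4
  · rintro (rfl | ⟨⟨hwv, hdvw⟩, hbig⟩)
    · refine ⟨⟨fun hh => huv hh.symm, ?_⟩, ?_⟩
      · rw [hs]; exact_mod_cast hsh
      · intro _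
        rw [aux_edist_top G w u huv]
        exact ENat.coe_lt_top h
    · have hwu : w ≠ u := by
        rintro rfl
        rw [SimpleGraph.edist_self] at hbig
        exact (hbig.trans_le zero_le).false
      refine ⟨⟨hwu, ?_⟩, fun _ => hbig⟩
      calc G.edist u w ≤ G.edist u v + G.edist v w := SimpleGraph.edist_triangle
        _ ≤ (s : ℕ∞) + ((h - s : ℕ) : ℕ∞) := by rw [hs]; exact add_le_add_right hdvw _
        _ = (h : ℕ∞) := by rw [← Nat.cast_add, Nat.add_sub_cancel' hsh]
end

section
/- Let G = (V,E) be a finite undirected simple graph, h a positive integer, v ∈ V, u ∈ N_v^h(G) with s = dis_G(u,v), and w ∈ N_v^{h-s}(G) with w ≠ u. Then dis_{G(V \ {v})}(u,w) ≤ h if and only if dis_{G(N_v^h(G))}(u,w) ≤ h, and in that case the two distances are equal: dis_{G(V \ {v})}(u,w) = dis_{G(N_v^h(G))}(u,w). -/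
open SimpleGraph

variable {V : Type*} [Fintype V] [DecidableEq V]

/-- For `u ∈ N_v^h(G)` with `s = dis_G(u,v)` and `w ∈ N_v^{h-s}(G)`, `w ≠ u`:
`dis_{G(V∖{v})}(u,w) ≤ h` iff `dis_{G(N_v^h(G))}(u,w) ≤ h`, and in that case the
two distances are equal. -/
theorem stmt6 (G : SimpleGraph V) (h : ℕ) (hpos : 0 < h) (v u w : V) (s : ℕ)
    (hu : u ∈ G.hNbhd h v) (hs : G.edist u v = (s : ℕ∞))
    (hw : w ∈ G.hNbhd (h - s) v) (hwu : w ≠ u) :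
    ((G.inducedOn {v}ᶜ).edist u w ≤ (h : ℕ∞) ↔
      (G.inducedOn (G.hNbhd h v)).edist u w ≤ (h : ℕ∞)) ∧
    ((G.inducedOn {v}ᶜ).edist u w ≤ (h : ℕ∞) →
      (G.inducedOn {v}ᶜ).edist u w = (G.inducedOn (G.hNbhd h v)).edist u w) := by
  obtain ⟨hune, huv⟩ := hu
  obtain ⟨hwne, hwv⟩ := hw
  have hs_le : s ≤ h := by
    rw [edist_comm, hs] at huv
    exact_mod_cast huv
  set A := G.inducedOn {v}ᶜ with hA
  set B := G.inducedOn (G.hNbhd h v) with hB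
  have hAG : A ≤ G := fun x y hxy => (show G.Adj x y ∧ _ from hxy).1
  have hBA : B ≤ A := by
    intro x y hxy
    have hxy : G.Adj x y ∧ x ∈ G.hNbhd h v ∧ y ∈ G.hNbhd h v := hxy
    show G.Adj x y ∧ x ∈ ({v}ᶜ : Set V) ∧ y ∈ ({v}ᶜ : Set V)
    exact ⟨hxy.1, by simpa using hxy.2.1.1, by simpa using hxy.2.2.1⟩
  have hmono : A.edist u w ≤ B.edist u w := edist_anti hBA
  -- key: any A-walk of length ≤ h transfers to B
  have key : ∀ p : A.Walk u w, p.length ≤ h → ∃ q : B.Walk u w, q.length = p.length := by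
    intro p hplen
    have hsupp : ∀ x ∈ p.support, G.edist v x ≤ (h : ℕ∞) := by
      intro x hx
      obtain ⟨q, r, rfl⟩ := SimpleGraph.Walk.mem_support_iff_exists_append.mp hx
      rw [SimpleGraph.Walk.length_append] at hplen
      have hqG : G.edist u x ≤ (q.length : ℕ∞) :=
        le_trans (edist_anti hAG) (edist_le q)
      have hrG : G.edist x w ≤ (r.length : ℕ∞) :=
        le_trans (edist_anti hAG) (edist_le r)
      by_cases hcase : s + q.length ≤ h
      · calc G.edist v x ≤ G.edist v u + G.edist u x := G.edist_triangle
          _ ≤ (s : ℕ∞) + (q.length : ℕ∞) := by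
              gcongr
              · rw [SimpleGraph.edist_comm]; exact le_of_eq hs
          _ = ((s + q.length : ℕ) : ℕ∞) := by push_cast; ring
          _ ≤ (h : ℕ∞) := by exact_mod_cast hcase
      · have hcase2 : (h - s) + r.length ≤ h := by omega
        calc G.edist v x ≤ G.edist v w + G.edist w x := G.edist_triangle
          _ ≤ ((h - s : ℕ) : ℕ∞) + (r.length : ℕ∞) := by
              gcongr
              rw [SimpleGraph.edist_comm]; exact hrG
          _ = (((h - s) + r.length : ℕ) : ℕ∞) := by push_cast; ring
          _ ≤ (h : ℕ∞) := by exact_mod_cast hcase2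
    have hedges : ∀ e ∈ p.edges, e ∈ B.edgeSet := by
      intro e he
      induction e with
      | h a b =>
        have hab : G.Adj a b ∧ a ∈ ({v}ᶜ : Set V) ∧ b ∈ ({v}ᶜ : Set V) := p.edges_subset_edgeSet he
        have ha : a ∈ p.support := p.fst_mem_support_of_mem_edges he
        have hb : b ∈ p.support := p.snd_mem_support_of_mem_edges he
        show G.Adj a b ∧ a ∈ G.hNbhd h v ∧ b ∈ G.hNbhd h v
        exact ⟨hab.1, ⟨by simpa using hab.2.1, hsupp a ha⟩,
          ⟨by simpa using hab.2.2, hsupp b hb⟩⟩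
    exact ⟨p.transfer B hedges, p.length_transfer hedges⟩
  have heq : A.edist u w ≤ (h : ℕ∞) → A.edist u w = B.edist u w := by
    intro hAle
    have hne : A.edist u w ≠ ⊤ := by
      intro ht
      rw [ht, top_le_iff] at hAle
      exact ENat.coe_ne_top h hAle
    obtain ⟨p, hp⟩ := exists_walk_of_edist_ne_top hne
    have hplen : p.length ≤ h := by
      have : (p.length : ℕ∞) ≤ (h : ℕ∞) := by rw [hp]; exact hAle
      exact_mod_cast this
    obtain ⟨q, hq⟩ := key p hplen
    refine le_antisymm hmono ?_
    calc B.edist u w ≤ (q.length : ℕ∞) := edist_le q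
      _ = (p.length : ℕ∞) := by exact_mod_cast hq
      _ = A.edist u w := hp
  refine ⟨⟨fun hAle => ?_, fun hBle => le_trans hmono hBle⟩, heq⟩
  rw [← heq hAle]; exact hAle
end

section
/- Let G = (V,E) be a finite undirected simple graph, h a positive integer, v ∈ V, and u ∈ N_v^h(G) with s = dis_G(u,v). Then the updated h-degree of u after deleting v can be computed on the subgraph induced by N_v^h(G): d_u^h(G(V \ {v})) = d_u^h(G) − 1 − |{w ∈ N_v^{h-s}(G) : w ≠ u and dis_{G(N_v^h(G))}(u,w) > h}|. -/
open SimpleGraph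

variable {V : Type*} [Fintype V] [DecidableEq V]

lemma aux_inducedOn_le (G : SimpleGraph V) (S : Set V) : G.inducedOn S ≤ G := by
  intro a b hab; exact hab.1

lemma aux_support_mem {G : SimpleGraph V} {S : Set V} {a b : V}
    (p : (G.inducedOn S).Walk a b) (ha : a ∈ S) : ∀ x ∈ p.support, x ∈ S := by
  induction p with
  | nil => intro x hx; rwa [SimpleGraph.Walk.mem_support_nil_iff.mp hx]
  | cons hadj q ih =>
    intro x hx
    rw [SimpleGraph.Walk.support_cons] at hx
    rcases List.mem_cons.mp hx with rfl | hx
    · exact ha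
    · exact ih hadj.2.2 x hx

lemma aux_end_of_walk {H : SimpleGraph V} {a b : V} (p : H.Walk a b)
    (hiso : ∀ x, ¬ H.Adj x b) : a = b := by
  induction p with
  | nil => rfl
  | cons hadj q ih => exact absurd (ih hiso ▸ hadj) (hiso _)

lemma aux_edist_le_of_le {G H : SimpleGraph V} (hle : H ≤ G) {a b : V} (p : H.Walk a b) :
    G.edist a b ≤ p.length :=
  (SimpleGraph.edist_anti hle).trans (SimpleGraph.edist_le p)

lemma aux_edist_inducedOn_le {G H : SimpleGraph V} (hle : H ≤ G) {S : Set V} {a b : V}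
    (p : H.Walk a b) (hsupp : ∀ x ∈ p.support, x ∈ S) :
    (G.inducedOn S).edist a b ≤ p.length := by
  have hedges : ∀ e ∈ p.edges, e ∈ (G.inducedOn S).edgeSet := by
    intro e
    refine Sym2.ind (fun x y he => ?_) e
    exact (SimpleGraph.mem_edgeSet _).mpr
      ⟨hle ((SimpleGraph.mem_edgeSet _).mp (p.edges_subset_edgeSet he)),
        hsupp x (p.fst_mem_support_of_mem_edges he),
        hsupp y (p.snd_mem_support_of_mem_edges he)⟩
  calc (G.inducedOn S).edist a b ≤ ((p.transfer _ hedges).length : ℕ∞) :=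
        SimpleGraph.edist_le _
    _ = p.length := by rw [SimpleGraph.Walk.length_transfer]

/-- The updated `h`-degree of `u` after deleting `v` can be computed on the subgraph
induced by `N_v^h(G)`. -/
theorem stmt7 (G : SimpleGraph V) (h : ℕ) (hpos : 0 < h) (v u : V) (s : ℕ)
    (hu : u ∈ G.hNbhd h v) (hs : G.edist u v = (s : ℕ∞)) :
    (G.inducedOn {v}ᶜ).hDeg h u =
      G.hDeg h u - 1 -
        {w ∈ G.hNbhd (h - s) v |
          w ≠ u ∧ (h : ℕ∞) < (G.inducedOn (G.hNbhd h v)).edist u w}.ncard := by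
  classical
  obtain ⟨huv, hvu⟩ := hu
  have hGvle : G.inducedOn {v}ᶜ ≤ G := aux_inducedOn_le G _
  have hGNle : G.inducedOn (G.hNbhd h v) ≤ G := aux_inducedOn_le G _
  have hNle : G.inducedOn (G.hNbhd h v) ≤ G.inducedOn {v}ᶜ := by
    intro a b hab
    exact ⟨hab.1, hab.2.1.1, hab.2.2.1⟩
  have hsh : s ≤ h := by
    have h1 : (s : ℕ∞) ≤ (h : ℕ∞) := by rw [← hs, SimpleGraph.edist_comm]; exact hvu
    exact_mod_cast h1
  set B : Set V := {w ∈ G.hNbhd (h - s) v |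
    w ≠ u ∧ (h : ℕ∞) < (G.inducedOn (G.hNbhd h v)).edist u w} with hB
  -- key set identity
  have key : (G.inducedOn {v}ᶜ).hNbhd h u = G.hNbhd h u \ ({v} ∪ B) := by
    ext w
    simp only [SimpleGraph.hNbhd, Set.mem_setOf_eq, Set.mem_diff, Set.mem_union,
      Set.mem_singleton_iff]
    constructor
    · rintro ⟨hwu, hw⟩
      have hwG : G.edist u w ≤ (h : ℕ∞) := (SimpleGraph.edist_anti hGvle).trans hw
      -- get shortest walk in G - v
      have hne : (G.inducedOn {v}ᶜ).edist u w ≠ ⊤ :=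
        (hw.trans_lt (WithTop.coe_lt_top h)).ne
      obtain ⟨p, hp⟩ := SimpleGraph.exists_walk_of_edist_ne_top hne
      have hplen : (p.length : ℕ∞) ≤ (h : ℕ∞) := by rw [hp]; exact hw
      have hplen' : p.length ≤ h := by exact_mod_cast hplen
      have huS : u ∈ ({v}ᶜ : Set V) := huv
      have hsupp := aux_support_mem p huS
      have hwv : w ≠ v := hsupp w p.end_mem_support
      refine ⟨⟨hwu, hwG⟩, ?_⟩
      rintro (rfl | ⟨⟨hwv', hvw⟩, hwu', hlt⟩)
      · exact hwv rfl
      · -- every support vertex is in the h-hop nbhd of v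
        have hsN : ∀ x ∈ p.support, x ∈ G.hNbhd h v := by
          intro x hx
          have hxv : x ≠ v := hsupp x hx
          set q := p.takeUntil x hx with hq
          set r := p.dropUntil x hx with hr
          have hlensum : q.length + r.length = p.length := by
            have := congrArg SimpleGraph.Walk.length (p.take_spec hx)
            rwa [SimpleGraph.Walk.length_append] at this
          have h1 : G.edist v x ≤ (s : ℕ∞) + q.length := by
            calc G.edist v x ≤ G.edist v u + G.edist u x := SimpleGraph.edist_triangle
              _ ≤ (s : ℕ∞) + q.length := by
                  gcongr
                  · rw [SimpleGraph.edist_comm]; exact hs.le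
                  · exact aux_edist_le_of_le hGvle q
          have h2 : G.edist v x ≤ ((h - s : ℕ) : ℕ∞) + r.length := by
            calc G.edist v x ≤ G.edist v w + G.edist w x := SimpleGraph.edist_triangle
              _ ≤ ((h - s : ℕ) : ℕ∞) + r.length := by
                  gcongr
                  rw [SimpleGraph.edist_comm]
                  exact aux_edist_le_of_le hGvle r
          have hcases : s + q.length ≤ h ∨ (h - s) + r.length ≤ h := by omega
          refine ⟨hxv, ?_⟩
          rcases hcases with hc | hc
          · calc G.edist v x ≤ (s : ℕ∞) + q.length := h1
              _ = ((s + q.length : ℕ) : ℕ∞) := by push_cast; ring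
              _ ≤ (h : ℕ∞) := by exact_mod_cast hc
          · calc G.edist v x ≤ ((h - s : ℕ) : ℕ∞) + r.length := h2
              _ = (((h - s) + r.length : ℕ) : ℕ∞) := by push_cast; ring
              _ ≤ (h : ℕ∞) := by exact_mod_cast hc
        have : (G.inducedOn (G.hNbhd h v)).edist u w ≤ (h : ℕ∞) :=
          (aux_edist_inducedOn_le hGvle p hsN).trans hplen
        exact absurd hlt (not_lt.mpr this)
    · rintro ⟨⟨hwu, hwG⟩, hnot⟩
      have hwv : w ≠ v := fun hh => hnot (Or.inl hh)
      refine ⟨hwu, ?_⟩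
      by_cases hmem : w ∈ G.hNbhd (h - s) v
      · have hle' : (G.inducedOn (G.hNbhd h v)).edist u w ≤ (h : ℕ∞) := by
          by_contra hlt
          exact hnot (Or.inr ⟨hmem, hwu, not_le.mp hlt⟩)
        exact (SimpleGraph.edist_anti hNle).trans hle'
      · have hvw : ((h - s : ℕ) : ℕ∞) < G.edist v w := by
          by_contra hle'
          exact hmem ⟨hwv, not_lt.mp hle'⟩
        have hne : G.edist u w ≠ ⊤ := (hwG.trans_lt (WithTop.coe_lt_top h)).ne
        obtain ⟨p, hp⟩ := SimpleGraph.exists_walk_of_edist_ne_top hne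
        have hplen' : p.length ≤ h := by
          have : (p.length : ℕ∞) ≤ (h : ℕ∞) := by rw [hp]; exact hwG
          exact_mod_cast this
        have hvp : v ∉ p.support := by
          intro hvs
          set q := p.takeUntil v hvs with hq
          set r := p.dropUntil v hvs with hr
          have hlensum : q.length + r.length = p.length := by
            have := congrArg SimpleGraph.Walk.length (p.take_spec hvs)
            rwa [SimpleGraph.Walk.length_append] at this
          have h1 : s ≤ q.length := by
            have : (s : ℕ∞) ≤ (q.length : ℕ∞) := by
              rw [← hs]; exact SimpleGraph.edist_le q
            exact_mod_cast this
          have h2 : h - s < r.length := by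
            have : ((h - s : ℕ) : ℕ∞) < (r.length : ℕ∞) :=
              hvw.trans_le (SimpleGraph.edist_le r)
            exact_mod_cast this
          omega
        have hsupp : ∀ x ∈ p.support, x ∈ ({v}ᶜ : Set V) := by
          intro x hx hxv
          rw [Set.mem_singleton_iff] at hxv
          exact hvp (hxv ▸ hx)
        calc (G.inducedOn {v}ᶜ).edist u w ≤ (p.length : ℕ∞) :=
              aux_edist_inducedOn_le le_rfl p hsupp
          _ ≤ (h : ℕ∞) := by exact_mod_cast hplen'
  -- cardinality computation
  have hvA : v ∈ G.hNbhd h u := by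
    refine ⟨Ne.symm huv, ?_⟩
    rw [hs]
    exact_mod_cast hsh
  have hBA : B ⊆ G.hNbhd h u := by
    rintro w ⟨⟨hwv, hvw⟩, hwu, -⟩
    refine ⟨hwu, ?_⟩
    calc G.edist u w ≤ G.edist u v + G.edist v w := SimpleGraph.edist_triangle
      _ ≤ (s : ℕ∞) + ((h - s : ℕ) : ℕ∞) := by rw [hs]; gcongr
      _ = ((s + (h - s) : ℕ) : ℕ∞) := by push_cast; ring
      _ = (h : ℕ∞) := by congr 1; omega
  have hvB : v ∉ B := fun hvB => hvB.1.1 rfl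
  have hsub : {v} ∪ B ⊆ G.hNbhd h u := by
    rw [Set.union_subset_iff, Set.singleton_subset_iff]
    exact ⟨hvA, hBA⟩
  rw [SimpleGraph.hDeg, SimpleGraph.hDeg, key, Set.ncard_diff hsub (Set.toFinite _),
    Set.singleton_union, Set.ncard_insert_of_notMem hvB (Set.toFinite _)]
  omega
end

section
/- Let G = (V,E) be a finite undirected simple graph with V nonempty and h a positive integer. For v ∈ V, define the (k,h)-core number core_h(v) as the largest integer k ≥ 0 such that there exists S ⊆ V with v ∈ S and d_u^h(G(S)) ≥ k for every u ∈ S. If v attains the minimum h-degree in G, i.e., d_v^h(G) ≤ d_u^h(G) for all u ∈ V, then core_h(v) = d_v^h(G). -/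
open SimpleGraph

variable {V : Type*} [Fintype V] [DecidableEq V]

lemma hDeg_mono {G G' : SimpleGraph V} (hle : G ≤ G') (h : ℕ) (u : V) :
    G.hDeg h u ≤ G'.hDeg h u := by
  apply Set.ncard_le_ncard _ (Set.toFinite _)
  rintro x ⟨hx, hd⟩
  exact ⟨hx, le_trans (SimpleGraph.edist_anti hle) hd⟩

lemma inducedOn_univ (G : SimpleGraph V) : G.inducedOn Set.univ = G := by
  ext x y; simp [SimpleGraph.inducedOn]

/-- If `v` attains the minimum `h`-degree in `G`, then its `(k,h)`-core number — the
largest `k` such that some `S ∋ v` has all its vertices of `h`-degree at least `k`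
within `G(S)` — equals `d_v^h(G)`. -/
theorem stmt14 (G : SimpleGraph V) [Nonempty V] (h : ℕ) (hpos : 0 < h) (v : V)
    (hmin : ∀ u : V, G.hDeg h v ≤ G.hDeg h u) :
    sSup {k : ℕ | ∃ S : Set V, v ∈ S ∧ ∀ u ∈ S, k ≤ (G.inducedOn S).hDeg h u} =
      G.hDeg h v := by
  have hub : ∀ k ∈ {k : ℕ | ∃ S : Set V, v ∈ S ∧ ∀ u ∈ S, k ≤ (G.inducedOn S).hDeg h u},
      k ≤ G.hDeg h v := by
    rintro k ⟨S, hvS, hS⟩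
    refine le_trans (hS v hvS) (hDeg_mono ?_ h v)
    intro x y hxy; exact hxy.1
  have hmem : G.hDeg h v ∈ {k : ℕ | ∃ S : Set V, v ∈ S ∧ ∀ u ∈ S, k ≤ (G.inducedOn S).hDeg h u} := by
    refine ⟨Set.univ, Set.mem_univ v, fun u _ => ?_⟩
    rw [inducedOn_univ]; exact hmin u
  exact le_antisymm (csSup_le ⟨_, hmem⟩ hub) (le_csSup ⟨_, hub⟩ hmem)
end
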